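/- Let ω ∈ ℝ^n, and for j ∈ ℤ^d let λ_j, μ_j ∈ ℂ satisfy: (a) the diophantine lower bound |i ω·l + λ_j - λ_{j'}| ≥ 2γ/(⟨l⟩^τ ⟨j⟩^τ ⟨j'⟩^τ) for all (l,j,j') with (l, j-j') ≠ (0,0); (b) the closeness bound |λ_j - μ_j| ≤ δ ⟨j⟩^{-2m} for all j, where m ≥ τ. If δ is small enough that 2Cδ N^{3τ} ≤ γ for the relevant constant C (where the indices satisfy |l|, |j-j'| ≤ N), then |i ω·l + μ_j - μ_{j'}| ≥ γ/(⟨l⟩^τ ⟨j⟩^τ ⟨j'⟩^τ) for all (l,j,j') ≠ (0,j,j) with |l|, |j-j'| ≤ N. Here the key fact to prove is: ⟨l⟩^τ ⟨j⟩^τ ⟨j'⟩^τ / min{⟨j⟩,⟨j'⟩}^{2m} ≤ C N^{3τ} whenever |l|, |j-j'| ≤ N and m ≥ τ. -/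

import Mathlib

noncomputable section

/-- Japanese bracket ⟨x⟩ = (1 + |x|²)^{1/2}. -/
def jp (m : ℕ) (x : Fin m → ℤ) : ℝ := Real.sqrt (1 + ∑ i, ((x i : ℝ))^2)

/-- Euclidean norm of an integer vector. -/
def en (m : ℕ) (x : Fin m → ℤ) : ℝ := Real.sqrt (∑ i, ((x i : ℝ))^2)

/-- The divisor i ω·l + λ_j - λ_{j'}. -/
def divisor (n d : ℕ) (ω : Fin n → ℝ) (lam : (Fin d → ℤ) → ℂ)
    (l : Fin n → ℤ) (j j' : Fin d → ℤ) : ℂ :=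
  Complex.I * ((∑ i, ω i * (l i : ℝ) : ℝ) : ℂ) + lam j - lam j'

lemma one_le_jp (d : ℕ) (x : Fin d → ℤ) : 1 ≤ jp d x := by
  have h : (0:ℝ) ≤ ∑ i, ((x i : ℝ))^2 := by positivity
  have : (1:ℝ) = Real.sqrt 1 := by simp
  rw [jp, this]
  exact Real.sqrt_le_sqrt (by linarith)

lemma jp_pos (d : ℕ) (x : Fin d → ℤ) : 0 < jp d x := lt_of_lt_of_le one_pos (one_le_jp d x)

lemma jp_le (d : ℕ) (N : ℝ) (hN : 1 ≤ N) (x : Fin d → ℤ) (hx : en d x ≤ N) :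
    jp d x ≤ Real.sqrt 2 * N := by
  have h0 : (0:ℝ) ≤ ∑ i, ((x i : ℝ))^2 := by positivity
  have hs : ∑ i, ((x i : ℝ))^2 ≤ N ^ 2 := by
    have := Real.sq_sqrt h0
    have h2 : en d x ^ 2 ≤ N ^ 2 := pow_le_pow_left₀ (Real.sqrt_nonneg _) hx 2
    rw [en] at h2; rw [this] at h2; exact h2
  have : jp d x ≤ Real.sqrt (2 * N ^ 2) := by
    rw [jp]; exact Real.sqrt_le_sqrt (by nlinarith)
  calc jp d x ≤ Real.sqrt (2 * N ^ 2) := this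
    _ = Real.sqrt 2 * N := by
        rw [Real.sqrt_mul (by norm_num), Real.sqrt_sq (by linarith)]

lemma en_sub_comm (d : ℕ) (x y : Fin d → ℤ) : en d (x - y) = en d (y - x) := by
  unfold en
  congr 1
  apply Finset.sum_congr rfl
  intro i _
  have : (((x - y) i : ℤ) : ℝ) = -(((y - x) i : ℤ) : ℝ) := by
    simp only [Pi.sub_apply]
    push_cast
    ring
  rw [this]
  ring

lemma jp_peetre (d : ℕ) (x y : Fin d → ℤ) :
    jp d x ≤ Real.sqrt 2 * jp d y * jp d (y - x) := by
  set A := ∑ i, ((y i : ℝ))^2 with hA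
  set B := ∑ i, (((y - x) i : ℤ) : ℝ)^2 with hB
  set S := ∑ i, ((x i : ℝ))^2 with hS
  have hA0 : 0 ≤ A := by positivity
  have hB0 : 0 ≤ B := by positivity
  have hS0 : 0 ≤ S := by positivity
  have hSAB : S ≤ 2 * A + 2 * B := by
    rw [hS, hA, hB]
    rw [Finset.mul_sum, Finset.mul_sum, ← Finset.sum_add_distrib]
    apply Finset.sum_le_sum
    intro i _
    have hc : (((y - x) i : ℤ) : ℝ) = (y i : ℝ) - (x i : ℝ) := by
      simp [Pi.sub_apply]
    rw [hc]
    nlinarith [sq_nonneg ((y i : ℝ) + ((y i : ℝ) - (x i : ℝ)) - (x i : ℝ)),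
      sq_nonneg ((y i : ℝ) - (x i : ℝ) + (y i : ℝ))]
  have hkey : 1 + S ≤ 2 * ((1 + A) * (1 + B)) := by nlinarith
  calc jp d x = Real.sqrt (1 + S) := rfl
    _ ≤ Real.sqrt (2 * ((1 + A) * (1 + B))) := Real.sqrt_le_sqrt hkey
    _ = Real.sqrt 2 * (Real.sqrt (1 + A) * Real.sqrt (1 + B)) := by
        rw [Real.sqrt_mul (by norm_num), Real.sqrt_mul (by linarith)]
    _ = Real.sqrt 2 * jp d y * jp d (y - x) := by rw [jp, jp]; ring

lemma key_aux (n d : ℕ) (τ m N : ℝ) (hτ : 0 < τ) (hm : τ ≤ m) (hN : 1 ≤ N)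
    (l : Fin n → ℤ) (j j' : Fin d → ℤ) (hl : en n l ≤ N) (hjj : en d (j - j') ≤ N) :
    jp n l ^ τ * jp d j ^ τ * jp d j' ^ τ
      ≤ (min (jp d j) (jp d j')) ^ (2 * m) * ((8:ℝ) ^ τ * N ^ (3 * τ)) := by
  have hN0 : (0:ℝ) ≤ N := by linarith
  set a := min (jp d j) (jp d j') with ha
  have ha1 : 1 ≤ a := le_min (one_le_jp d j) (one_le_jp d j')
  have ha0 : (0:ℝ) < a := by linarith
  have hs2 : Real.sqrt 2 * Real.sqrt 2 = 2 := Real.mul_self_sqrt (by norm_num)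
  have hs2le : Real.sqrt 2 ≤ 2 := by nlinarith [Real.sqrt_nonneg 2]
  have hs2pos : 0 < Real.sqrt 2 := Real.sqrt_pos.mpr (by norm_num)
  have hL : jp n l ≤ Real.sqrt 2 * N := jp_le n N hN l hl
  -- max of the two brackets is ≤ 2 * N * a
  have hmax : max (jp d j) (jp d j') ≤ 2 * N * a := by
    rcases le_total (jp d j) (jp d j') with h | h
    · have hmx : max (jp d j) (jp d j') = jp d j' := max_eq_right h
      have hmn : a = jp d j := by rw [ha, min_eq_left h]
      have hp := jp_peetre d j' j
      have hk : jp d (j - j') ≤ Real.sqrt 2 * N := jp_le d N hN _ hjj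
      rw [hmx, hmn]
      calc jp d j' ≤ Real.sqrt 2 * jp d j * jp d (j - j') := hp
        _ ≤ Real.sqrt 2 * jp d j * (Real.sqrt 2 * N) :=
            mul_le_mul_of_nonneg_left hk
              (mul_nonneg (Real.sqrt_nonneg 2) (jp_pos d j).le)
        _ = (Real.sqrt 2 * Real.sqrt 2) * (N * jp d j) := by ring
        _ = 2 * N * jp d j := by rw [hs2]; ring
    · have hmx : max (jp d j) (jp d j') = jp d j := max_eq_left h
      have hmn : a = jp d j' := by rw [ha, min_eq_right h]
      have hp := jp_peetre d j j'
      have hk : jp d (j' - j) ≤ Real.sqrt 2 * N := by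
        rw [show jp d (j' - j) = Real.sqrt ((en d (j' - j))^2 + 1) from ?_]
        · have : en d (j' - j) ≤ N := by rw [en_sub_comm]; exact hjj
          have h0 : 0 ≤ en d (j' - j) := Real.sqrt_nonneg _
          have : (en d (j' - j))^2 + 1 ≤ 2 * N^2 := by nlinarith
          calc Real.sqrt ((en d (j' - j))^2 + 1) ≤ Real.sqrt (2 * N^2) :=
                Real.sqrt_le_sqrt this
            _ = Real.sqrt 2 * N := by
                rw [Real.sqrt_mul (by norm_num), Real.sqrt_sq (by linarith)]
        · rw [jp, en, Real.sq_sqrt (by positivity)]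
          ring_nf
      rw [hmx, hmn]
      calc jp d j ≤ Real.sqrt 2 * jp d j' * jp d (j' - j) := hp
        _ ≤ Real.sqrt 2 * jp d j' * (Real.sqrt 2 * N) :=
            mul_le_mul_of_nonneg_left hk
              (mul_nonneg (Real.sqrt_nonneg 2) (jp_pos d j').le)
        _ = (Real.sqrt 2 * Real.sqrt 2) * (N * jp d j') := by ring
        _ = 2 * N * jp d j' := by rw [hs2]; ring
  -- product bound
  have h1 : jp n l * jp d j * jp d j' ≤ 8 * N ^ (3:ℝ) * a ^ (2:ℝ) := by
    have hN3 : N ^ (3:ℝ) = N^3 := by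
      rw [show (3:ℝ) = ((3:ℕ):ℝ) by norm_num, Real.rpow_natCast]
    have ha2 : a ^ (2:ℝ) = a^2 := by
      rw [show (2:ℝ) = ((2:ℕ):ℝ) by norm_num, Real.rpow_natCast]
    rw [hN3, ha2]
    have hjja : jp d j * jp d j' ≤ a * (2 * N * a) := by
      rcases le_total (jp d j) (jp d j') with h | h
      · have hmn : a = jp d j := by rw [ha, min_eq_left h]
        have hmx : jp d j' ≤ 2 * N * a := le_trans (le_max_right _ _) hmax
        rw [hmn] at hmx ⊢
        exact mul_le_mul_of_nonneg_left hmx (jp_pos d j).le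
      · have hmn : a = jp d j' := by rw [ha, min_eq_right h]
        have hmx : jp d j ≤ 2 * N * a := le_trans (le_max_left _ _) hmax
        calc jp d j * jp d j' ≤ (2 * N * a) * jp d j' :=
            mul_le_mul_of_nonneg_right hmx (jp_pos d j').le
          _ = a * (2 * N * a) := by rw [← hmn]; ring
    have hL1 : 0 ≤ jp d j * jp d j' := mul_nonneg (jp_pos d j).le (jp_pos d j').le
    calc jp n l * jp d j * jp d j' = jp n l * (jp d j * jp d j') := by ring
      _ ≤ (Real.sqrt 2 * N) * (jp d j * jp d j') :=
          mul_le_mul_of_nonneg_right hL hL1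
      _ ≤ (Real.sqrt 2 * N) * (a * (2 * N * a)) :=
          mul_le_mul_of_nonneg_left hjja (mul_nonneg (Real.sqrt_nonneg 2) hN0)
      _ = 2 * Real.sqrt 2 * (N^2 * a^2) := by ring
      _ ≤ 8 * N^3 * a^2 := by
          have hN23 : N^2 ≤ N^3 := by nlinarith
          have h4 : 2 * Real.sqrt 2 ≤ 4 := by nlinarith
          have hX0 : (0:ℝ) ≤ N^2 * a^2 := by positivity
          have h5 : 2 * Real.sqrt 2 * (N^2 * a^2) ≤ 4 * (N^2 * a^2) :=
            mul_le_mul_of_nonneg_right h4 hX0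
          have h6 : N^2 * a^2 ≤ N^3 * a^2 :=
            mul_le_mul_of_nonneg_right hN23 (sq_nonneg a)
          have h7 : (0:ℝ) ≤ N^3 * a^2 := by positivity
          nlinarith
  have hτ' : (0:ℝ) ≤ τ := hτ.le
  have hlp := (jp_pos n l).le
  have hjp := (jp_pos d j).le
  have hjp' := (jp_pos d j').le
  calc jp n l ^ τ * jp d j ^ τ * jp d j' ^ τ
      = (jp n l * jp d j * jp d j') ^ τ := by
        rw [Real.mul_rpow (by positivity) hjp', Real.mul_rpow hlp hjp]
    _ ≤ (8 * N ^ (3:ℝ) * a ^ (2:ℝ)) ^ τ := Real.rpow_le_rpow (by positivity) h1 hτ'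
    _ = (8:ℝ) ^ τ * N ^ (3 * τ) * a ^ (2 * τ) := by
        rw [Real.mul_rpow (by positivity) (by positivity),
          Real.mul_rpow (by norm_num) (by positivity),
          ← Real.rpow_mul hN0, ← Real.rpow_mul ha0.le]
    _ ≤ a ^ (2 * m) * ((8:ℝ) ^ τ * N ^ (3 * τ)) := by
        have hexp : a ^ (2 * τ) ≤ a ^ (2 * m) :=
          Real.rpow_le_rpow_of_exponent_le ha1 (by linarith)
        calc (8:ℝ) ^ τ * N ^ (3 * τ) * a ^ (2 * τ)
            = a ^ (2 * τ) * ((8:ℝ) ^ τ * N ^ (3 * τ)) := by ring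
          _ ≤ a ^ (2 * m) * ((8:ℝ) ^ τ * N ^ (3 * τ)) :=
            mul_le_mul_of_nonneg_right hexp (by positivity)

/-- stability of second Melnikov conditions under perturbation of
the eigenvalues by δ⟨j⟩^{-2m}. There is a constant C > 0 such that
⟨l⟩^τ⟨j⟩^τ⟨j'⟩^τ / min(⟨j⟩,⟨j'⟩)^{2m} ≤ C N^{3τ} for |l|, |j-j'| ≤ N, and if
2 C δ N^{3τ} ≤ γ then the Melnikov lower bound 2γ/(⟨l⟩^τ⟨j⟩^τ⟨j'⟩^τ) for λ
implies the bound γ/(⟨l⟩^τ⟨j⟩^τ⟨j'⟩^τ) for any μ with |λ_j - μ_j| ≤ δ⟨j⟩^{-2m}. -/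
theorem stmt_11 (n d : ℕ) (τ m γ N : ℝ)
    (hγ : 0 < γ) (hγ1 : γ < 1) (hτ : 0 < τ) (hm : τ ≤ m) (hN : 1 ≤ N) :
    ∃ C : ℝ, 0 < C ∧
      (∀ l : Fin n → ℤ, ∀ j j' : Fin d → ℤ, en n l ≤ N → en d (j - j') ≤ N →
        jp n l ^ τ * jp d j ^ τ * jp d j' ^ τ / (min (jp d j) (jp d j')) ^ (2 * m)
          ≤ C * N ^ (3 * τ)) ∧
      (∀ δ : ℝ, 0 ≤ δ → 2 * C * δ * N ^ (3 * τ) ≤ γ →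
        ∀ ω : Fin n → ℝ, ∀ lam mu : (Fin d → ℤ) → ℂ,
        (∀ l : Fin n → ℤ, ∀ j j' : Fin d → ℤ, ¬(l = 0 ∧ j = j') →
          2 * γ / (jp n l ^ τ * jp d j ^ τ * jp d j' ^ τ)
            ≤ ‖divisor n d ω lam l j j'‖) →
        (∀ j : Fin d → ℤ, ‖lam j - mu j‖ ≤ δ * jp d j ^ (-(2 * m))) →
        ∀ l : Fin n → ℤ, ∀ j j' : Fin d → ℤ, ¬(l = 0 ∧ j = j') →
          en n l ≤ N → en d (j - j') ≤ N →
          γ / (jp n l ^ τ * jp d j ^ τ * jp d j' ^ τ)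
            ≤ ‖divisor n d ω mu l j j'‖) := by
  refine ⟨(8:ℝ) ^ τ, by positivity, ?_, ?_⟩
  · intro l j j' hl hjj
    have hkey := key_aux n d τ m N hτ hm hN l j j' hl hjj
    have hmin1 : 1 ≤ min (jp d j) (jp d j') := le_min (one_le_jp d j) (one_le_jp d j')
    have hmpos : (0:ℝ) < (min (jp d j) (jp d j')) ^ (2 * m) :=
      Real.rpow_pos_of_pos (by linarith) _
    rw [div_le_iff₀ hmpos]
    calc jp n l ^ τ * jp d j ^ τ * jp d j' ^ τ
        ≤ (min (jp d j) (jp d j')) ^ (2 * m) * ((8:ℝ) ^ τ * N ^ (3 * τ)) := hkey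
      _ = (8:ℝ) ^ τ * N ^ (3 * τ) * (min (jp d j) (jp d j')) ^ (2 * m) := by ring
  · intro δ hδ hsmall ω lam mu hlam hclose l j j' hne hl hjj
    set P := jp n l ^ τ * jp d j ^ τ * jp d j' ^ τ with hP
    have hPpos : 0 < P := by
      rw [hP]
      have := jp_pos n l; have := jp_pos d j; have := jp_pos d j'
      positivity
    set a := min (jp d j) (jp d j') with ha
    have ha1 : 1 ≤ a := le_min (one_le_jp d j) (one_le_jp d j')
    have ha0 : (0:ℝ) < a := by linarith
    have hapow : (0:ℝ) < a ^ (2 * m) := Real.rpow_pos_of_pos ha0 _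
    -- part-1 bound: P ≤ 8^τ N^{3τ} a^{2m}
    have hkey := key_aux n d τ m N hτ hm hN l j j' hl hjj
    -- triangle inequality
    have htri : ‖divisor n d ω lam l j j'‖
        ≤ ‖divisor n d ω mu l j j'‖ + ‖lam j - mu j‖ + ‖lam j' - mu j'‖ := by
      have heq : divisor n d ω lam l j j'
          = divisor n d ω mu l j j' + (lam j - mu j) - (lam j' - mu j') := by
        simp only [divisor]; ring
      rw [heq]
      exact (norm_sub_le _ _).trans (add_le_add_left (norm_add_le _ _) _)
    have hlow := hlam l j j' hne
    have hdj := hclose j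
    have hdj' := hclose j'
    -- bound the perturbations via the min
    have hmono : ∀ x : Fin d → ℤ, a ≤ jp d x →
        jp d x ^ (-(2 * m)) ≤ a ^ (-(2 * m)) := by
      intro x hx
      apply Real.rpow_le_rpow_of_nonpos ha0 hx
      nlinarith
    have hbj : ‖lam j - mu j‖ ≤ δ * a ^ (-(2 * m)) := by
      refine hdj.trans (mul_le_mul_of_nonneg_left ?_ hδ)
      exact hmono j (min_le_left _ _)
    have hbj' : ‖lam j' - mu j'‖ ≤ δ * a ^ (-(2 * m)) := by
      refine hdj'.trans (mul_le_mul_of_nonneg_left ?_ hδ)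
      exact hmono j' (min_le_right _ _)
    rw [← ha] at hkey
    -- 2 δ a^{-2m} ≤ γ / P
    have hfin : 2 * (δ * a ^ (-(2 * m))) ≤ γ / P := by
      have hPle : P ≤ (8:ℝ) ^ τ * N ^ (3 * τ) * a ^ (2 * m) := by
        calc P ≤ a ^ (2 * m) * ((8:ℝ) ^ τ * N ^ (3 * τ)) := hkey
          _ = (8:ℝ) ^ τ * N ^ (3 * τ) * a ^ (2 * m) := by ring
      have h1 : 2 * δ * P ≤ γ * a ^ (2 * m) := by
        calc 2 * δ * P ≤ 2 * δ * ((8:ℝ) ^ τ * N ^ (3 * τ) * a ^ (2 * m)) :=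
            mul_le_mul_of_nonneg_left hPle (by positivity)
          _ = (2 * (8:ℝ) ^ τ * δ * N ^ (3 * τ)) * a ^ (2 * m) := by ring
          _ ≤ γ * a ^ (2 * m) := mul_le_mul_of_nonneg_right hsmall hapow.le
      rw [Real.rpow_neg ha0.le]
      rw [show 2 * (δ * (a ^ (2 * m))⁻¹) = 2 * δ / a ^ (2 * m) by
        rw [div_eq_mul_inv]; ring]
      rw [div_le_div_iff₀ hapow hPpos]
      exact h1
    -- combine
    have h2γ : 2 * γ / P ≤ ‖divisor n d ω mu l j j'‖ + 2 * (δ * a ^ (-(2 * m))) := by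
      calc 2 * γ / P ≤ ‖divisor n d ω lam l j j'‖ := hlow
        _ ≤ ‖divisor n d ω mu l j j'‖ + ‖lam j - mu j‖ + ‖lam j' - mu j'‖ := htri
        _ ≤ ‖divisor n d ω mu l j j'‖ + 2 * (δ * a ^ (-(2 * m))) := by linarith
    have : γ / P = 2 * γ / P - γ / P := by ring
    rw [this]
    have hγP : 2 * (δ * a ^ (-(2 * m))) ≤ γ / P := hfin
    linarith
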